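/- arXiv:2305.06017 — 2 statements merged into one kernel-verified Lean document; each statement's English description precedes it below -/
import Mathlib

section
/- Let X be the projective limit of a sequence (X_l)_{l∈ℕ} of Hausdorff, locally convex topological real vector spaces with continuous embeddings X_{l+1} ↪ X_l, let (Ω, 𝔄, ℙ) be a probability space, and let Y_i : Ω → X for i in an index set I be maps which are random variables (Borel measurable) in each of the spaces X_l. Then the family (Y_i)_{i∈I} is tight on X if and only if it is tight on X_l for every l ∈ ℕ. -/
open MeasureTheory ENNReal

/-- A family of maps `Y i : Ω → Z` into a topological space is *tight* if for every `δ > 0`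
there is a compact set `K ⊆ Z` such that for all `i` the event `{Y i ∉ K}` is measurable and
has probability less than `δ`. -/
def TightFamily {Ω Z : Type*} {I : Type*} [MeasurableSpace Ω] [TopologicalSpace Z]
    (P : Measure Ω) (Y : I → Ω → Z) : Prop :=
  ∀ δ : ℝ≥0∞, 0 < δ → ∃ K : Set Z, IsCompact K ∧
    ∀ i, MeasurableSet {ω | Y i ω ∉ K} ∧ P {ω | Y i ω ∉ K} < δ

/-- Let `Y` be the projective limit of a sequence `(X l)` of Hausdorff, locally convex
topological real vector spaces with continuous injective linear embeddings, and let
`(Z i)` be a family of maps `Ω → Y` on a probability space which are Borel random variables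
in each of the spaces `X l`.  Then `(Z i)` is tight on `Y` if and only if it is tight on
`X l` for every `l`. -/
theorem tightFamily_projectiveLimit_iff
    (X : ℕ → Type*) [∀ l, TopologicalSpace (X l)] [∀ l, AddCommGroup (X l)]
    [∀ l, Module ℝ (X l)] [∀ l, T2Space (X l)]
    [∀ l, IsTopologicalAddGroup (X l)] [∀ l, ContinuousSMul ℝ (X l)]
    [∀ l, LocallyConvexSpace ℝ (X l)]
    [∀ l, MeasurableSpace (X l)] [∀ l, BorelSpace (X l)]
    (e : ∀ l, X (l + 1) →ₗ[ℝ] X l)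
    (he_cont : ∀ l, Continuous (e l))
    (he_inj : ∀ l, Function.Injective (e l))
    (Y : Type*) (f : ∀ l, Y → X l)
    (hf_compat : ∀ l y, f l y = e l (f (l + 1) y))
    (hf_inj : ∀ l, Function.Injective (f l))
    (hf_surj : ∀ x : ∀ l, X l, (∀ l, x l = e l (x (l + 1))) → ∃ y, ∀ l, f l y = x l)
    [tY : TopologicalSpace Y]
    (htY : tY = ⨅ l, TopologicalSpace.induced (f l) inferInstance)
    {Ω : Type*} [MeasurableSpace Ω] (P : Measure Ω) [IsProbabilityMeasure P]
    {I : Type*} (Z : I → Ω → Y)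
    (hmeas : ∀ i l, Measurable fun ω => f l (Z i ω)) :
    TightFamily P Z ↔ ∀ l, TightFamily P fun i ω => f l (Z i ω) := by
  have hcont : ∀ l, Continuous (f l) := fun l =>
    continuous_iff_le_induced.2 (htY.le.trans (iInf_le _ l))
  constructor
  · intro h l δ hδ
    obtain ⟨K, hK, hKi⟩ := h δ hδ
    refine ⟨f l '' K, hK.image (hcont l), fun i => ?_⟩
    have hcl : IsClosed (f l '' K) := (hK.image (hcont l)).isClosed
    have hms : MeasurableSet {ω | f l (Z i ω) ∉ f l '' K} :=
      (hmeas i l) hcl.measurableSet.compl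
    refine ⟨hms, lt_of_le_of_lt (measure_mono ?_) (hKi i).2⟩
    intro ω hω
    exact fun hmem => hω (Set.mem_image_of_mem _ hmem)
  · intro h δ hδ
    set δ' : ℝ≥0∞ := min δ 1 with hδ'
    have hδ'0 : 0 < δ' := lt_min hδ zero_lt_one
    have hδ't : δ' ≠ ⊤ := (lt_of_le_of_lt (min_le_right _ _) one_lt_top).ne
    have hhalf : 0 < δ' / 2 := ENNReal.div_pos hδ'0.ne' (by norm_num)
    -- choose compacts
    choose K hKc hKm using fun l => h l (δ' / 2 * (2⁻¹ : ℝ≥0∞) ^ (l + 1))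
      (ENNReal.mul_pos hhalf.ne'
        (pow_ne_zero _ (ENNReal.inv_ne_zero.2 (by norm_num))))
    set S : Set Y := ⋂ l, f l ⁻¹' K l with hS
    -- the embedding into the product
    have hind : Topology.IsInducing (fun y l => f l y : Y → ∀ l, X l) := by
      rw [htY]; exact inducing_iInf_to_pi f
    have hemb : Topology.IsEmbedding (fun y l => f l y : Y → ∀ l, X l) :=
      ⟨hind, fun a b hab => hf_inj 0 (congrFun hab 0)⟩
    have himg : (fun y l => f l y) '' S =
        (Set.univ.pi K) ∩ {x : ∀ l, X l | ∀ l, x l = e l (x (l + 1))} := by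
      ext x
      constructor
      · rintro ⟨y, hy, rfl⟩
        refine ⟨fun l _ => ?_, fun l => hf_compat l y⟩
        exact Set.mem_iInter.1 hy l
      · rintro ⟨hx1, hx2⟩
        obtain ⟨y, hy⟩ := hf_surj x hx2
        refine ⟨y, Set.mem_iInter.2 fun l => ?_, funext hy⟩
        show f l y ∈ K l
        rw [hy l]; exact hx1 l (Set.mem_univ l)
    have hclosed : IsClosed {x : ∀ l, X l | ∀ l, x l = e l (x (l + 1))} := by
      have : {x : ∀ l, X l | ∀ l, x l = e l (x (l + 1))} =
          ⋂ l, {x : ∀ l, X l | x l = e l (x (l + 1))} := by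
        ext x; simp [Set.mem_iInter]
      rw [this]
      exact isClosed_iInter fun l =>
        isClosed_eq (continuous_apply l) ((he_cont l).comp (continuous_apply (l + 1)))
    have hScompact : IsCompact S := by
      rw [hemb.isCompact_iff, himg]
      exact (isCompact_univ_pi hKc).inter_right hclosed
    refine ⟨S, hScompact, fun i => ?_⟩
    have hset : {ω | Z i ω ∉ S} = ⋃ l, {ω | f l (Z i ω) ∉ K l} := by
      ext ω; simp [hS, Set.mem_iInter]
    have hms : MeasurableSet {ω | Z i ω ∉ S} := by
      rw [hset]; exact MeasurableSet.iUnion fun l => (hKm l i).1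
    refine ⟨hms, ?_⟩
    calc P {ω | Z i ω ∉ S} ≤ ∑' l, P {ω | f l (Z i ω) ∉ K l} := by
            rw [hset]; exact measure_iUnion_le _
      _ ≤ ∑' l, δ' / 2 * (2⁻¹ : ℝ≥0∞) ^ (l + 1) :=
            ENNReal.tsum_le_tsum fun l => (hKm l i).2.le
      _ = δ' / 2 := by
            rw [ENNReal.tsum_mul_left]
            have h1 : ∑' l : ℕ, (2⁻¹ : ℝ≥0∞) ^ (l + 1) = 1 := by
              simp_rw [pow_succ']
              rw [ENNReal.tsum_mul_left, ENNReal.tsum_geometric]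
              norm_num
              exact ENNReal.inv_mul_cancel (by norm_num) (by norm_num)
            rw [h1, mul_one]
      _ < δ' := ENNReal.half_lt_self hδ'0.ne' hδ't
      _ ≤ δ := min_le_left _ _
end

section
/- Let X be a Hausdorff topological real vector space, (Y_i)_{i∈I} a family of X-valued Borel random variables on a probability space (Ω, 𝔄, ℙ), and (A_j)_{j∈ℕ} a measurable partition of Ω. If for every j ∈ ℕ the family (𝟙_{A_j}·Y_i)_{i∈I} is tight on X (where 𝟙_{A_j}·Y_i equals Y_i on A_j and 0 off A_j), then the family (Y_i)_{i∈I} is tight on X. -/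
open MeasureTheory ENNReal

/-- Let `X` be a Hausdorff topological real vector space, `(Y i)` a family of `X`-valued Borel
random variables on a probability space and `(A j)_{j ∈ ℕ}` a measurable partition of `Ω`.
If for every `j` the family `(𝟙_{A j} · Y i)_i` is tight on `X`, then `(Y i)_i` is tight
on `X`. -/
theorem tightFamily_of_partition
    (X : Type*) [TopologicalSpace X] [AddCommGroup X] [Module ℝ X] [T2Space X]
    [IsTopologicalAddGroup X] [ContinuousSMul ℝ X]
    [MeasurableSpace X] [BorelSpace X]
    {Ω : Type*} [MeasurableSpace Ω] (P : Measure Ω) [IsProbabilityMeasure P]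
    {I : Type*} (Y : I → Ω → X) (hY : ∀ i, Measurable (Y i))
    (A : ℕ → Set Ω) (hA_meas : ∀ j, MeasurableSet (A j))
    (hA_disj : Pairwise (Function.onFun Disjoint A)) (hA_cover : ⋃ j, A j = Set.univ)
    (htight : ∀ j, TightFamily P fun i => (A j).indicator (Y i)) :
    TightFamily P Y := by
  intro δ hδ
  set ε : ℝ≥0∞ := min δ 1 with hεdef
  have hε0 : 0 < ε := lt_min hδ one_pos
  have hεδ : ε ≤ δ := min_le_left _ _
  -- choose compact sets for each j
  have hchoice : ∀ j : ℕ, ∃ K : Set X, IsCompact K ∧ ∀ i,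
      MeasurableSet {ω | (A j).indicator (Y i) ω ∉ K} ∧
      P {ω | (A j).indicator (Y i) ω ∉ K} < ε / 2 ^ (j + 2) := by
    intro j
    refine htight j _ (ENNReal.div_pos hε0.ne' ?_)
    exact ENNReal.pow_ne_top ENNReal.ofNat_ne_top
  choose K hKc hK using hchoice
  -- choose N with small complement of the partial cover
  set C : ℕ → Set Ω := fun n => (⋃ j ∈ Finset.range n, A j)ᶜ with hCdef
  have hCmeas : ∀ n, MeasurableSet (C n) := fun n =>
    (MeasurableSet.biUnion (Finset.range n).countable_toSet fun j _ => hA_meas j).compl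
  have hCanti : Antitone C := by
    intro m n hmn
    apply Set.compl_subset_compl.2
    intro ω hω
    simp only [Set.mem_iUnion, Finset.mem_range] at hω ⊢
    obtain ⟨j, hj, hωj⟩ := hω
    exact ⟨j, lt_of_lt_of_le hj hmn, hωj⟩
  have hCinter : ⋂ n, C n = ∅ := by
    have hU : ⋃ n, (⋃ j ∈ Finset.range n, A j) = ⋃ j, A j := by
      apply Set.Subset.antisymm
      · exact Set.iUnion_subset fun n =>
          Set.iUnion₂_subset fun j _ => Set.subset_iUnion A j
      · exact Set.iUnion_subset fun j =>
          Set.subset_iUnion_of_subset (j + 1)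
            (Set.subset_biUnion_of_mem (Finset.self_mem_range_succ j))
    simp only [C, ← Set.compl_iUnion, hU, hA_cover, Set.compl_univ]
  have htend : Filter.Tendsto (fun n => P (C n)) Filter.atTop (nhds 0) := by
    have := MeasureTheory.tendsto_measure_iInter_atTop (μ := P) (fun n => (hCmeas n).nullMeasurableSet)
      hCanti ⟨0, measure_ne_top _ _⟩
    rwa [hCinter, measure_empty] at this
  have hhalfpos : 0 < ε / 2 := ENNReal.div_pos hε0.ne' ENNReal.ofNat_ne_top
  obtain ⟨N, hN⟩ : ∃ N, P (C N) < ε / 2 := by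
    rcases (Filter.Tendsto.eventually_lt_const hhalfpos htend).exists with ⟨N, hN⟩
    exact ⟨N, hN⟩
  -- the compact set
  refine ⟨⋃ j ∈ Finset.range N, K j, ?_, ?_⟩
  · exact (Finset.range N).finite_toSet.isCompact_biUnion fun j _ => hKc j
  intro i
  set Kb : Set X := ⋃ j ∈ Finset.range N, K j with hKbdef
  have hKbclosed : IsClosed Kb :=
    ((Finset.range N).finite_toSet.isCompact_biUnion fun j _ => hKc j).isClosed
  have hmeas : MeasurableSet {ω | Y i ω ∉ Kb} := by
    have : {ω | Y i ω ∉ Kb} = Y i ⁻¹' Kbᶜ := rfl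
    rw [this]
    exact hY i hKbclosed.measurableSet.compl
  refine ⟨hmeas, ?_⟩
  -- inclusion into bad sets
  have hsub : {ω | Y i ω ∉ Kb} ⊆
      C N ∪ ⋃ j ∈ Finset.range N, {ω | (A j).indicator (Y i) ω ∉ K j} := by
    intro ω hω
    by_cases hC : ω ∈ C N
    · exact Or.inl hC
    · right
      simp only [C, Set.mem_compl_iff, not_not, Set.mem_iUnion] at hC
      obtain ⟨j, hjN, hωj⟩ := hC
      refine Set.mem_biUnion hjN ?_
      have hind : (A j).indicator (Y i) ω = Y i ω := Set.indicator_of_mem hωj _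
      simp only [Set.mem_setOf_eq, hind]
      intro hmem
      exact hω (Set.mem_biUnion hjN hmem)
  have hsum : ∑ j ∈ Finset.range N, P {ω | (A j).indicator (Y i) ω ∉ K j} ≤ ε / 2 := by
    calc ∑ j ∈ Finset.range N, P {ω | (A j).indicator (Y i) ω ∉ K j}
        ≤ ∑ j ∈ Finset.range N, ε / 2 ^ (j + 2) :=
          Finset.sum_le_sum fun j _ => ((hK j i).2).le
      _ ≤ ∑' j : ℕ, ε / 2 ^ (j + 2) := ENNReal.sum_le_tsum _
      _ = ε / 2 := by
          have h1 : ∀ j : ℕ, ε / 2 ^ (j + 2) = (ε / 4) * (2 : ℝ≥0∞)⁻¹ ^ j := by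
            intro j
            rw [div_eq_mul_inv, div_eq_mul_inv, mul_assoc]
            congr 1
            rw [show ((2 : ℝ≥0∞)) ^ (j + 2) = 4 * 2 ^ j by
                rw [pow_add, mul_comm]; norm_num,
              ENNReal.mul_inv (Or.inl (by norm_num)) (Or.inl (by norm_num)),
              ENNReal.inv_pow]
          simp_rw [h1]
          rw [ENNReal.tsum_mul_left, ENNReal.tsum_geometric,
            ENNReal.one_sub_inv_two, inv_inv]
          have h4 : ε / 4 = ε / 2 * 2⁻¹ := by
            rw [div_eq_mul_inv, div_eq_mul_inv, mul_assoc,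
              ← ENNReal.mul_inv (Or.inl two_ne_zero) (Or.inl ENNReal.ofNat_ne_top)]
            norm_num
          rw [h4, mul_assoc, ENNReal.inv_mul_cancel two_ne_zero ENNReal.ofNat_ne_top,
            mul_one]
  calc P {ω | Y i ω ∉ Kb}
      ≤ P (C N ∪ ⋃ j ∈ Finset.range N, {ω | (A j).indicator (Y i) ω ∉ K j}) :=
        measure_mono hsub
    _ ≤ P (C N) + P (⋃ j ∈ Finset.range N, {ω | (A j).indicator (Y i) ω ∉ K j}) :=
        measure_union_le _ _
    _ ≤ P (C N) + ∑ j ∈ Finset.range N, P {ω | (A j).indicator (Y i) ω ∉ K j} := by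
        gcongr
        exact measure_biUnion_finset_le _ _
    _ < ε / 2 + ε / 2 := by
        have hεtop : ε ≠ ⊤ := ((min_le_right δ 1).trans_lt ENNReal.one_lt_top).ne
        have hc : ∑ j ∈ Finset.range N, P {ω | (A j).indicator (Y i) ω ∉ K j} ≠ ⊤ :=
          (hsum.trans_lt (ENNReal.div_lt_top hεtop (by norm_num))).ne
        exact ENNReal.add_lt_add_of_lt_of_le hc hN hsum
    _ = ε := ENNReal.add_halves ε
    _ ≤ δ := hεδ
end
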